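/- (Finite container bound implies density bound) Let V be a packing in ℝ³ and let c be a real number such that for every real r ≥ 1 the number of points of V in the open ball B(0,r) is at most π·r³/√18 + c·r². Then the limit superior, as r → ∞, of vol((⋃_{v ∈ V} B(v,1)) ∩ B(0,r)) / vol(B(0,r)) is at most π/√18. -/

import Mathlib

open Real Metric MeasureTheory Filter

open scoped ENNReal
local notation "E" => EuclideanSpace ℝ (Fin 3)

noncomputable section

private lemma packing_finite (V : Set (EuclideanSpace ℝ (Fin 3)))
    (hV : ∀ u ∈ V, ∀ v ∈ V, u ≠ v → 2 ≤ dist u v) (R : ℝ) :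
    (V ∩ ball (0 : EuclideanSpace ℝ (Fin 3)) R).Finite := by
  set S := V ∩ ball (0 : EuclideanSpace ℝ (Fin 3)) R with hS
  have hfin : Set.Finite {i : S | volume (ball (0:EuclideanSpace ℝ (Fin 3)) 1) ≤ volume (ball (i:EuclideanSpace ℝ (Fin 3)) 1)} := by
    apply MeasureTheory.Measure.finite_const_le_meas_of_disjoint_iUnion (volume)
      (ε := volume (ball (0:EuclideanSpace ℝ (Fin 3)) 1))
    · exact measure_ball_pos _ _ one_pos
    · exact fun i => measurableSet_ball
    · intro i j hij
      apply ball_disjoint_ball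
      norm_num
      exact hV i i.2.1 j j.2.1 (fun h => hij (Subtype.ext h))
    · refine ne_top_of_le_ne_top (measure_ball_lt_top (x := (0:EuclideanSpace ℝ (Fin 3))) (r := |R| + 1)).ne (measure_mono ?_)
      rintro x hx
      simp only [Set.mem_iUnion, mem_ball] at hx
      obtain ⟨i, hx⟩ := hx
      have h1 : dist (i : EuclideanSpace ℝ (Fin 3)) 0 < R := i.2.2
      calc dist x 0 ≤ dist x i + dist (i:EuclideanSpace ℝ (Fin 3)) 0 := dist_triangle _ _ _
        _ < 1 + R := by exact add_lt_add hx h1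
        _ ≤ |R| + 1 := by have := le_abs_self R; linarith
  have : {i : S | volume (ball (0:EuclideanSpace ℝ (Fin 3)) 1) ≤ volume (ball (i:EuclideanSpace ℝ (Fin 3)) 1)} = Set.univ := by
    ext i; simp [Measure.addHaar_ball_center]
  rw [this] at hfin
  have : Finite S := Set.finite_univ_iff.mp hfin
  exact Set.finite_coe_iff.mp this

/-- (Finite container bound implies density bound) If `V` is a packing in `ℝ³` and `c` is a
real number such that for every `r ≥ 1` the number of points of `V` in the open ball `B(0,r)`
is at most `π·r³/√18 + c·r²`, then the limsup, as `r → ∞`, of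
`vol((⋃ v ∈ V, B(v,1)) ∩ B(0,r)) / vol(B(0,r))` is at most `π/√18`. -/
theorem finite_container_bound_implies_density_bound
    (V : Set (EuclideanSpace ℝ (Fin 3)))
    (hV : ∀ u ∈ V, ∀ v ∈ V, u ≠ v → 2 ≤ dist u v)
    (c : ℝ)
    (hc : ∀ r : ℝ, 1 ≤ r →
      ((V ∩ ball (0 : EuclideanSpace ℝ (Fin 3)) r).ncard : ℝ) ≤
        π * r ^ 3 / Real.sqrt 18 + c * r ^ 2) :
    limsup (fun r : ℝ =>
        (volume ((⋃ v ∈ V, ball v 1) ∩ ball (0 : EuclideanSpace ℝ (Fin 3)) r)).toReal /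
          (volume (ball (0 : EuclideanSpace ℝ (Fin 3)) r)).toReal) atTop
      ≤ π / Real.sqrt 18 := by
  set f : ℝ → ℝ := fun r =>
    (volume ((⋃ v ∈ V, ball v 1) ∩ ball (0 : E) r)).toReal /
      (volume (ball (0 : E) r)).toReal with hf
  set g : ℝ → ℝ := fun r => (π * (r+1) ^ 3 / Real.sqrt 18 + c * (r+1) ^ 2) / r ^ 3 with hg
  set B₁ := (volume (ball (0 : E) 1)).toReal with hB₁
  have hB₁pos : 0 < B₁ := ENNReal.toReal_pos (measure_ball_pos _ _ one_pos).ne'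
    measure_ball_lt_top.ne
  -- pointwise bound f ≤ g for r ≥ 1
  have hfg : ∀ r : ℝ, 1 ≤ r → f r ≤ g r := by
    intro r hr
    have hr0 : (0:ℝ) < r := lt_of_lt_of_le one_pos hr
    set S := V ∩ ball (0 : E) (r + 1) with hSdef
    have hSfin : S.Finite := packing_finite V hV (r+1)
    -- inclusion
    have hsub : (⋃ v ∈ V, ball v 1) ∩ ball (0 : E) r ⊆ ⋃ v ∈ hSfin.toFinset, ball v 1 := by
      rintro x ⟨hx1, hx2⟩
      simp only [Set.mem_iUnion, mem_ball] at hx1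
      obtain ⟨v, hvV, hxv⟩ := hx1
      have hxr : dist x 0 < r := hx2
      have : dist v 0 < r + 1 := by
        calc dist v 0 ≤ dist v x + dist x 0 := dist_triangle _ _ _
          _ < 1 + r := add_lt_add (by rwa [dist_comm]) hxr
          _ = r + 1 := by ring
      simp only [Set.mem_iUnion, mem_ball, Set.Finite.mem_toFinset]
      exact ⟨v, ⟨hvV, this⟩, hxv⟩
    have hnum : volume ((⋃ v ∈ V, ball v 1) ∩ ball (0 : E) r)
        ≤ (S.ncard : ℝ≥0∞) * volume (ball (0:E) 1) := by
      calc volume ((⋃ v ∈ V, ball v 1) ∩ ball (0 : E) r)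
          ≤ volume (⋃ v ∈ hSfin.toFinset, ball v 1) := measure_mono hsub
        _ ≤ ∑ v ∈ hSfin.toFinset, volume (ball v 1) := measure_biUnion_finset_le _ _
        _ = ∑ v ∈ hSfin.toFinset, volume (ball (0:E) 1) := by
            refine Finset.sum_congr rfl fun v _ => Measure.addHaar_ball_center _ _ _
        _ = (hSfin.toFinset.card : ℝ≥0∞) * volume (ball (0:E) 1) := by
            rw [Finset.sum_const, nsmul_eq_mul]
        _ = (S.ncard : ℝ≥0∞) * volume (ball (0:E) 1) := by
            rw [Set.ncard_eq_toFinset_card S hSfin]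
    have hnumR : (volume ((⋃ v ∈ V, ball v 1) ∩ ball (0 : E) r)).toReal
        ≤ (S.ncard : ℝ) * B₁ := by
      have := ENNReal.toReal_mono (by
        exact ENNReal.mul_ne_top (by simp) measure_ball_lt_top.ne) hnum
      rw [ENNReal.toReal_mul] at this
      simpa only [ENNReal.toReal_natCast] using this
    have hden : (volume (ball (0:E) r)).toReal = r ^ 3 * B₁ := by
      rw [Measure.addHaar_ball volume (0:E) hr0.le, ENNReal.toReal_mul,
        ENNReal.toReal_ofReal (by positivity)]
      rw [finrank_euclideanSpace_fin, hB₁]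
    have step1 : f r ≤ (S.ncard : ℝ) / r ^ 3 := by
      rw [hf]
      simp only
      rw [hden]
      calc (volume ((⋃ v ∈ V, ball v 1) ∩ ball (0 : E) r)).toReal / (r ^ 3 * B₁)
          ≤ ((S.ncard : ℝ) * B₁) / (r ^ 3 * B₁) := by gcongr
        _ = (S.ncard : ℝ) / r ^ 3 := mul_div_mul_right _ _ hB₁pos.ne'
    refine step1.trans ?_
    rw [hg]
    have := hc (r+1) (by linarith)
    exact div_le_div_of_nonneg_right this (by positivity) |>.trans_eq rfl
  -- g tends to π/√18
  have hgt : Tendsto g atTop (nhds (π / Real.sqrt 18)) := by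
    have heq : ∀ᶠ r : ℝ in atTop,
        π / Real.sqrt 18 * (1 + r⁻¹) ^ 3 + (c * r⁻¹) * (1 + r⁻¹) ^ 2 = g r := by
      filter_upwards [eventually_gt_atTop (0:ℝ)] with r hr
      rw [hg]
      have h18 : Real.sqrt 18 ≠ 0 := by positivity
      field_simp
    have h1 : Tendsto (fun r : ℝ => r⁻¹) atTop (nhds 0) := tendsto_inv_atTop_zero
    have : Tendsto (fun r : ℝ => π / Real.sqrt 18 * (1 + r⁻¹) ^ 3 + (c * r⁻¹) * (1 + r⁻¹) ^ 2)
        atTop (nhds (π / Real.sqrt 18 * (1 + 0) ^ 3 + (c * 0) * (1 + 0) ^ 2)) := by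
      exact ((tendsto_const_nhds.mul (((tendsto_const_nhds.add h1).pow 3)))).add
        ((tendsto_const_nhds.mul h1).mul (((tendsto_const_nhds.add h1).pow 2)))
    simp only [add_zero, mul_zero, one_pow, mul_one, zero_mul, one_pow] at this
    exact this.congr' heq
  -- conclude
  have hcob : IsCoboundedUnder (· ≤ ·) atTop f :=
    isCoboundedUnder_le_of_le atTop (x := 0)
      (fun r => div_nonneg ENNReal.toReal_nonneg ENNReal.toReal_nonneg)
  refine le_of_forall_pos_le_add fun ε hε => ?_
  apply Filter.limsup_le_of_le hcob
  have hev : ∀ᶠ r : ℝ in atTop, g r < π / Real.sqrt 18 + ε :=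
    hgt.eventually_lt_const (lt_add_of_pos_right _ hε)
  filter_upwards [hev, eventually_ge_atTop (1:ℝ)] with r h1 h2
  exact (hfg r h2).trans h1.le
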